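/- (First derivative test) Let a < b be real numbers and let f, g : [a,b] → ℝ be continuously differentiable with f′(x) ≠ 0 for all x ∈ [a,b], and suppose the function x ↦ g(x)/f′(x) is monotone on [a,b]. Then |∫_a^b g(x)·exp(i·f(x)) dx| ≤ 4 · max_{x ∈ [a,b]} |g(x)/f′(x)|. -/

import Mathlib

open Set MeasureTheory intervalIntegral

set_option maxHeartbeats 1000000

/-- Key estimate: if `F` has derivative `F'` on `[a,b]`, `‖F‖ ≤ 1` there, and `h` is
monotone and continuous on `[a,b]`, then `‖∫ h·F'‖ ≤ 4 sup |h|`. -/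
lemma fdt_key (a b : ℝ) (hab : a < b) (F F' : ℝ → ℂ) (h : ℝ → ℝ)
    (hF : ∀ x ∈ Icc a b, HasDerivWithinAt F (F' x) (Icc a b) x)
    (hF'c : ContinuousOn F' (Icc a b))
    (hFle : ∀ x ∈ Icc a b, ‖F x‖ ≤ 1)
    (hhm : MonotoneOn h (Icc a b))
    (hhc : ContinuousOn h (Icc a b)) :
    ‖∫ x in a..b, (h x : ℂ) * F' x‖ ≤ 4 * sSup ((fun x => |h x|) '' Icc a b) := by
  have hab' : a ≤ b := hab.le
  set π : ℝ → ℝ := fun x => (Set.projIcc a b hab' x : ℝ) with hπ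
  have hπcont : Continuous π := continuous_subtype_val.comp (continuous_projIcc)
  have hπmem : ∀ x, π x ∈ Icc a b := fun x => (Set.projIcc a b hab' x).2
  have hπeq : ∀ x ∈ Icc a b, π x = x := fun x hx => by
    simp [hπ, Set.projIcc_of_mem hab' hx]
  -- globalized versions of h, F, F'
  set H : ℝ → ℝ := fun x => h (π x) with hH
  set G : ℝ → ℂ := fun x => F (π x) with hG
  set G' : ℝ → ℂ := fun x => F' (π x) with hG'
  have hFc : ContinuousOn F (Icc a b) := fun x hx => (hF x hx).continuousWithinAt
  have hHc : Continuous H := hhc.comp_continuous hπcont hπmem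
  have hGc : Continuous G := hFc.comp_continuous hπcont hπmem
  have hG'c : Continuous G' := hF'c.comp_continuous hπcont hπmem
  have hHm : Monotone H := fun x y hxy =>
    hhm (hπmem x) (hπmem y) (by exact_mod_cast Set.monotone_projIcc hab' hxy)
  have hHeq : ∀ x ∈ Icc a b, H x = h x := fun x hx => by rw [hH]; simp [hπeq x hx]
  have hGeq : ∀ x ∈ Icc a b, G x = F x := fun x hx => by rw [hG]; simp [hπeq x hx]
  have hG'eq : ∀ x ∈ Icc a b, G' x = F' x := fun x hx => by rw [hG']; simp [hπeq x hx]
  have hGle : ∀ x, ‖G x‖ ≤ 1 := fun x => hFle _ (hπmem x)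
  -- derivative of G
  have hGd : ∀ x ∈ Icc a b, HasDerivWithinAt G (G' x) (Icc a b) x := fun x hx => by
    rw [hG'eq x hx]
    exact (hF x hx).congr (fun y hy => hGeq y hy) (hGeq x hx)
  -- Stieltjes measure
  set S : StieltjesFunction ℝ := ⟨H, hHm, fun x => hHc.continuousAt.continuousWithinAt⟩ with hS
  set μ := S.measure with hμ
  set ν := μ.restrict (Ioc a b) with hν
  set lam := (volume : Measure ℝ).restrict (Ioc a b) with hlam
  haveI : IsFiniteMeasure ν := by
    constructor
    rw [hν, Measure.restrict_apply_univ, hμ, S.measure_Ioc]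
    exact ENNReal.ofReal_lt_top
  haveI : IsFiniteMeasure lam := by
    constructor
    rw [hlam, Measure.restrict_apply_univ]
    exact measure_Ioc_lt_top
  have hνuniv : (ν Set.univ).toReal = H b - H a := by
    rw [hν, Measure.restrict_apply_univ, hμ, S.measure_Ioc]
    exact ENNReal.toReal_ofReal (sub_nonneg.2 (hHm hab'))
  -- the kernel
  set K : ℝ → ℝ → ℂ := fun x t => (Set.Iic x).indicator (fun _ => G' x) t with hK
  -- inner integral over t
  have hKin : ∀ x ∈ Icc a b, (∫ t, K x t ∂ν) = (H x - H a) • G' x := by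
    intro x hx
    rw [hK]
    rw [MeasureTheory.integral_indicator_const (G' x) measurableSet_Iic]
    congr 1
    rw [hν, measureReal_def, Measure.restrict_apply measurableSet_Iic, hμ]
    have : Set.Iic x ∩ Set.Ioc a b = Set.Ioc a x := by
      ext t
      simp only [Set.mem_inter_iff, Set.mem_Iic, Set.mem_Ioc]
      exact ⟨fun ⟨h1, h2, _⟩ => ⟨h2, h1⟩, fun ⟨h1, h2⟩ => ⟨h2, h1, h2.trans hx.2⟩⟩
    rw [this, S.measure_Ioc]
    exact ENNReal.toReal_ofReal (sub_nonneg.2 (hHm hx.1))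
  -- FTC on [t, b]
  have hFTC : ∀ t ∈ Icc a b, (∫ x in t..b, G' x) = G b - G t := by
    intro t ht
    apply intervalIntegral.integral_eq_sub_of_hasDeriv_right_of_le ht.2
    · exact hGc.continuousOn
    · intro x hx
      have hx' : x ∈ Set.Ioo a b := ⟨lt_of_le_of_lt ht.1 hx.1, hx.2⟩
      have : HasDerivAt G (G' x) x := by
        apply (hGd x (Set.Ioo_subset_Icc_self hx')).hasDerivAt
        exact Icc_mem_nhds hx'.1 hx'.2
      exact this.hasDerivWithinAt
    · exact hG'c.intervalIntegrable t b
  -- Fubini swap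
  have hInt : Integrable (Function.uncurry K) (lam.prod ν) := by
    have hmeas : StronglyMeasurable (Function.uncurry K) := by
      have : Function.uncurry K = fun p : ℝ × ℝ =>
          ({p : ℝ × ℝ | p.2 ≤ p.1}.indicator (fun p => G' p.1)) p := by
        funext p
        simp only [Function.uncurry, hK, Set.indicator, Set.mem_Iic, Set.mem_setOf_eq]
      rw [this]
      exact ((hG'c.comp continuous_fst).stronglyMeasurable).indicator
        (measurableSet_le measurable_snd measurable_fst)
    obtain ⟨C, hC⟩ := isCompact_Icc.exists_bound_of_continuousOn hF'c
    apply (integrable_const C).mono' hmeas.aestronglyMeasurable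
    apply ae_of_all
    rintro ⟨x, t⟩
    simp only [Function.uncurry, hK]
    calc ‖(Set.Iic x).indicator (fun _ => G' x) t‖ ≤ ‖G' x‖ :=
          norm_indicator_le_norm_self (fun _ => G' x) t
      _ ≤ C := hC _ (hπmem x)
  -- main identity
  have hmain : (∫ x in Set.Ioc a b, (H x : ℂ) * G' x) =
      (H b : ℂ) * G b - (H a : ℂ) * G a - ∫ t, G t ∂ν := by
    have step1 : (∫ x in Set.Ioc a b, (H x : ℂ) * G' x) =
        ∫ x in Set.Ioc a b, ((H a : ℂ) * G' x + ∫ t, K x t ∂ν) := by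
      apply MeasureTheory.setIntegral_congr_fun measurableSet_Ioc
      intro x hx
      dsimp only
      rw [hKin x (Set.Ioc_subset_Icc_self hx)]
      push_cast [Complex.real_smul]
      ring
    have int1 : IntegrableOn (fun x => (H a : ℂ) * G' x) (Set.Ioc a b) volume :=
      (Continuous.integrableOn_Ioc (continuous_const.mul hG'c))
    have int2 : Integrable (fun x => ∫ t, K x t ∂ν) lam := by
      apply (Continuous.integrableOn_Ioc (f := fun x => (H x - H a) • G' x) ((hHc.sub continuous_const).smul hG'c)).congr
      · exact ((ae_restrict_iff' measurableSet_Ioc).2 (ae_of_all _ (fun x hx =>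
          (hKin x (Set.Ioc_subset_Icc_self hx)).symm)))
    have step2 : (∫ x in Set.Ioc a b, ((H a : ℂ) * G' x + ∫ t, K x t ∂ν)) =
        (∫ x in Set.Ioc a b, (H a : ℂ) * G' x) + ∫ x, (∫ t, K x t ∂ν) ∂lam := by
      rw [hlam]; exact MeasureTheory.integral_add int1 int2
    have step3 : (∫ x, (∫ t, K x t ∂ν) ∂lam) = ∫ t, (∫ x, K x t ∂lam) ∂ν :=
      MeasureTheory.integral_integral_swap hInt
    have step4 : (∫ t, (∫ x, K x t ∂lam) ∂ν) = ∫ t, (G b - G t) ∂ν := by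
      apply MeasureTheory.setIntegral_congr_fun measurableSet_Ioc
      intro t ht
      dsimp only
      have h1 : (∫ x, K x t ∂lam) = ∫ x in Set.Ioc a b, (Set.Ici t).indicator G' x := by
        rw [hlam]
        apply MeasureTheory.setIntegral_congr_fun measurableSet_Ioc
        intro x _
        simp only [hK, Set.indicator, Set.mem_Iic, Set.mem_Ici]
      rw [h1, MeasureTheory.setIntegral_indicator measurableSet_Ici]
      have h2 : Set.Ioc a b ∩ Set.Ici t = Set.Icc t b := by
        ext x
        simp only [Set.mem_inter_iff, Set.mem_Ioc, Set.mem_Ici, Set.mem_Icc]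
        exact ⟨fun ⟨⟨_, h2⟩, h3⟩ => ⟨h3, h2⟩, fun ⟨h1, h2⟩ => ⟨⟨lt_of_lt_of_le ht.1 h1, h2⟩, h1⟩⟩
      rw [h2, MeasureTheory.integral_Icc_eq_integral_Ioc,
        ← intervalIntegral.integral_of_le ht.2]
      exact hFTC t (Set.Ioc_subset_Icc_self ht)
    have intG : Integrable G ν := by
      apply (integrable_const (1 : ℝ)).mono' hGc.aestronglyMeasurable
      exact ae_of_all _ hGle
    have step5 : (∫ t, (G b - G t) ∂ν) = ((H b - H a) : ℝ) • G b - ∫ t, G t ∂ν := by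
      rw [MeasureTheory.integral_sub (integrable_const _) intG,
        MeasureTheory.integral_const, measureReal_def, hνuniv]
    have hG'int : (∫ x in Set.Ioc a b, G' x) = G b - G a := by
      rw [← intervalIntegral.integral_of_le hab']
      exact hFTC a ⟨le_refl a, hab'⟩
    rw [step1, step2, step3, step4, step5]
    rw [MeasureTheory.integral_const_mul, hG'int]
    push_cast [Complex.real_smul]
    ring
  -- now do the estimate
  set M := sSup ((fun x => |h x|) '' Icc a b) with hM
  have hbdd : BddAbove ((fun x => |h x|) '' Icc a b) :=
    (isCompact_Icc.image_of_continuousOn hhc.abs).bddAbove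
  have hMle : ∀ x ∈ Icc a b, |h x| ≤ M := fun x hx =>
    le_csSup hbdd (Set.mem_image_of_mem _ hx)
  have haI : a ∈ Icc a b := ⟨le_refl a, hab'⟩
  have hbI : b ∈ Icc a b := ⟨hab', le_refl b⟩
  have hIoc : ‖∫ t, G t ∂ν‖ ≤ 1 * (ν Set.univ).toReal := by
    apply MeasureTheory.norm_integral_le_of_norm_le_const
    exact ae_of_all _ hGle
  rw [intervalIntegral.integral_of_le hab']
  have hgoal : (∫ x in Set.Ioc a b, (h x : ℂ) * F' x) =
      ∫ x in Set.Ioc a b, (H x : ℂ) * G' x := by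
    apply MeasureTheory.setIntegral_congr_fun measurableSet_Ioc
    intro x hx
    dsimp only
    rw [hHeq x (Set.Ioc_subset_Icc_self hx), hG'eq x (Set.Ioc_subset_Icc_self hx)]
  rw [hgoal, hmain]
  have e1 : ‖(H b : ℂ) * G b‖ ≤ M := by
    rw [norm_mul, Complex.norm_real, hHeq b hbI]
    calc |h b| * ‖G b‖ ≤ |h b| * 1 := by
          exact mul_le_mul_of_nonneg_left (hGle b) (abs_nonneg _)
      _ ≤ M := by rw [mul_one]; exact hMle b hbI
  have e2 : ‖(H a : ℂ) * G a‖ ≤ M := by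
    rw [norm_mul, Complex.norm_real, hHeq a haI]
    calc |h a| * ‖G a‖ ≤ |h a| * 1 :=
          mul_le_mul_of_nonneg_left (hGle a) (abs_nonneg _)
      _ ≤ M := by rw [mul_one]; exact hMle a haI
  have e3 : ‖∫ t, G t ∂ν‖ ≤ 2 * M := by
    refine hIoc.trans ?_
    rw [one_mul, hνuniv, hHeq a haI, hHeq b hbI]
    have := hMle a haI; have := hMle b hbI
    have h1 : h b ≤ M := le_trans (le_abs_self _) (hMle b hbI)
    have h2 : -M ≤ h a := neg_le_of_abs_le (hMle a haI)
    linarith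
  calc ‖(H b : ℂ) * G b - (H a : ℂ) * G a - ∫ t, G t ∂ν‖
      ≤ ‖(H b : ℂ) * G b - (H a : ℂ) * G a‖ + ‖∫ t, G t ∂ν‖ := norm_sub_le _ _
    _ ≤ ‖(H b : ℂ) * G b‖ + ‖(H a : ℂ) * G a‖ + ‖∫ t, G t ∂ν‖ := by
        have := norm_sub_le ((H b : ℂ) * G b) ((H a : ℂ) * G a); linarith
    _ ≤ M + M + 2 * M := by linarith [e1, e2, e3]
    _ = 4 * M := by ring

lemma fdt_key2 (a b : ℝ) (hab : a < b) (F F' : ℝ → ℂ) (h : ℝ → ℝ)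
    (hF : ∀ x ∈ Icc a b, HasDerivWithinAt F (F' x) (Icc a b) x)
    (hF'c : ContinuousOn F' (Icc a b))
    (hFle : ∀ x ∈ Icc a b, ‖F x‖ ≤ 1)
    (hhm : MonotoneOn h (Icc a b) ∨ AntitoneOn h (Icc a b))
    (hhc : ContinuousOn h (Icc a b)) :
    ‖∫ x in a..b, (h x : ℂ) * F' x‖ ≤ 4 * sSup ((fun x => |h x|) '' Icc a b) := by
  rcases hhm with hm | ham
  · exact fdt_key a b hab F F' h hF hF'c hFle hm hhc
  · have key := fdt_key a b hab F F' (fun x => -h x) hF hF'c hFle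
      (fun x hx y hy hxy => neg_le_neg (ham hx hy hxy)) hhc.neg
    have e1 : (∫ x in a..b, ((-h x : ℝ) : ℂ) * F' x) = -∫ x in a..b, (h x : ℂ) * F' x := by
      rw [← intervalIntegral.integral_neg]
      apply intervalIntegral.integral_congr
      intro x _
      push_cast
      ring
    rw [e1, norm_neg] at key
    simpa only [abs_neg] using key


/-- The first derivative test for oscillatory integrals. -/
theorem first_derivative_test (a b : ℝ) (hab : a < b) (f g f' g' : ℝ → ℝ)
    (hf : ∀ x ∈ Set.Icc a b, HasDerivWithinAt f (f' x) (Set.Icc a b) x)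
    (hg : ∀ x ∈ Set.Icc a b, HasDerivWithinAt g (g' x) (Set.Icc a b) x)
    (hf'c : ContinuousOn f' (Set.Icc a b))
    (hg'c : ContinuousOn g' (Set.Icc a b))
    (hf'ne : ∀ x ∈ Set.Icc a b, f' x ≠ 0)
    (hmono : MonotoneOn (fun x => g x / f' x) (Set.Icc a b) ∨
             AntitoneOn (fun x => g x / f' x) (Set.Icc a b)) :
    ‖∫ x in a..b, (g x : ℂ) * Complex.exp (Complex.I * (f x : ℂ))‖
      ≤ 4 * sSup ((fun x => |g x / f' x|) '' Set.Icc a b) := by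
  set F : ℝ → ℂ := fun x => -Complex.I * Complex.exp (Complex.I * (f x : ℂ)) with hF
  set Fd : ℝ → ℂ := fun x => (f' x : ℂ) * Complex.exp (Complex.I * (f x : ℂ)) with hFd
  have hfc : ContinuousOn f (Set.Icc a b) := fun x hx => (hf x hx).continuousWithinAt
  have hgc : ContinuousOn g (Set.Icc a b) := fun x hx => (hg x hx).continuousWithinAt
  have hexpc : ContinuousOn (fun x => Complex.exp (Complex.I * (f x : ℂ))) (Set.Icc a b) :=
    (continuousOn_const.mul (Complex.continuous_ofReal.comp_continuousOn hfc)).cexp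
  have hFdc : ContinuousOn Fd (Set.Icc a b) :=
    (Complex.continuous_ofReal.comp_continuousOn hf'c).mul hexpc
  have hFderiv : ∀ x ∈ Set.Icc a b, HasDerivWithinAt F (Fd x) (Set.Icc a b) x := by
    intro x hx
    have h1 : HasDerivWithinAt (fun y => ((f y : ℝ) : ℂ)) ((f' x : ℂ)) (Set.Icc a b) x := by
      exact (hf x hx).ofReal_comp
    have h2 := h1.const_mul Complex.I
    have h3 := h2.cexp
    have h4 := h3.const_mul (-Complex.I)
    convert h4 using 1
    · rfl
    rw [hFd]
    simp only
    ring_nf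
    rw [Complex.I_sq]
    ring
  have hFle : ∀ x ∈ Set.Icc a b, ‖F x‖ ≤ 1 := by
    intro x hx
    rw [hF]
    simp only [norm_mul, norm_neg, Complex.norm_I, one_mul,
      Complex.norm_exp]
    simp
  have hhc : ContinuousOn (fun x => g x / f' x) (Set.Icc a b) := hgc.div hf'c hf'ne
  have key := fdt_key2 a b hab F Fd (fun x => g x / f' x) hFderiv hFdc hFle hmono hhc
  have e1 : (∫ x in a..b, ((g x / f' x : ℝ) : ℂ) * Fd x)
      = ∫ x in a..b, (g x : ℂ) * Complex.exp (Complex.I * (f x : ℂ)) := by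
    apply intervalIntegral.integral_congr
    intro x hx
    rw [Set.uIcc_of_le hab.le] at hx
    simp only [hFd, Complex.ofReal_div]
    have hne : ((f' x : ℂ)) ≠ 0 := Complex.ofReal_ne_zero.mpr (hf'ne x hx)
    field_simp
  rw [e1] at key
  exact key
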